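/- Let f : ℝⁿ → ℝ be convex, L-smooth, with minimizer w*, and suppose gradient steps w_{t+1} = w_t - η g_t use noisy gradients g_t = ∇f(w_t) + λ_t with ‖λ_t‖ ≤ Λ and η = 1/(2L). Then f(w_{t+1}) - f(w_t) ≤ -(1/(4L))‖∇f(w_t)‖² + (1/(2L))‖∇f(w_t)‖Λ + (1/(4L))Λ², hence if ‖∇f(w_t)‖ ≥ 2Λ then f(w_{t+1}) - f(w_t) ≤ -(1/(16L))‖∇f(w_t)‖². -/

import Mathlib

open RealInnerProductSpace

lemma descent_aux {n : ℕ} (f : EuclideanSpace ℝ (Fin n) → ℝ) (L : ℝ) (hL : 0 ≤ L)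
    (hdiff : Differentiable ℝ f)
    (hsmooth : ∀ u v, ‖gradient f u - gradient f v‖ ≤ L * ‖u - v‖)
    (x v : EuclideanSpace ℝ (Fin n)) :
    f (x + v) ≤ f x + ⟪gradient f x, v⟫ + L / 2 * ‖v‖ ^ 2 := by
  set h : ℝ → ℝ := fun t => f (x + t • v) - t * ⟪gradient f x, v⟫ - L * t ^ 2 / 2 * ‖v‖ ^ 2 with hh
  have hderiv : ∀ t : ℝ, HasDerivAt h
      (⟪gradient f (x + t • v), v⟫ - ⟪gradient f x, v⟫ - L * t * ‖v‖ ^ 2) t := by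
    intro t
    have h1 : HasDerivAt (fun t : ℝ => x + t • v) v t := by
      simpa using ((hasDerivAt_id t).smul_const v).const_add x
    have h2 : HasFDerivAt f ((InnerProductSpace.toDual ℝ _) (gradient f (x + t • v))) (x + t • v) :=
      (hdiff (x + t • v)).hasGradientAt.hasFDerivAt
    have h3 : HasDerivAt (fun t : ℝ => f (x + t • v)) ⟪gradient f (x + t • v), v⟫ t := by
      exact (h2.comp_hasDerivAt t h1).congr_deriv (by simp)
    have h4 : HasDerivAt (fun t : ℝ => t * ⟪gradient f x, v⟫) ⟪gradient f x, v⟫ t := by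
      simpa using (hasDerivAt_id t).mul_const _
    have h5 : HasDerivAt (fun t : ℝ => L * t ^ 2 / 2 * ‖v‖ ^ 2) (L * t * ‖v‖ ^ 2) t := by
      have : HasDerivAt (fun t : ℝ => t ^ 2) (2 * t) t := by
        simpa using hasDerivAt_pow 2 t
      have := ((this.const_mul L).div_const 2).mul_const (‖v‖ ^ 2)
      exact this.congr_deriv (by ring)
    exact (h3.sub h4).sub h5
  have hmono : h 1 ≤ h 0 := by
    have : AntitoneOn h (Set.Icc 0 1) := by
      apply AntitoneOn.mono (s := Set.Icc (0:ℝ) 1)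
      · apply antitoneOn_of_deriv_nonpos (convex_Icc (0:ℝ) 1)
        · exact Continuous.continuousOn (by
            have : Continuous h := by
              apply Continuous.sub
              apply Continuous.sub
              · exact hdiff.continuous.comp (by continuity)
              · continuity
              · continuity
            exact this)
        · intro t ht
          exact (hderiv t).differentiableAt.differentiableWithinAt
        · intro t ht
          rw [interior_Icc] at ht
          rw [(hderiv t).deriv]
          have hb : ⟪gradient f (x + t • v) - gradient f x, v⟫ ≤ L * t * ‖v‖ ^ 2 := by
            calc ⟪gradient f (x + t • v) - gradient f x, v⟫
                ≤ ‖gradient f (x + t • v) - gradient f x‖ * ‖v‖ := real_inner_le_norm _ _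
              _ ≤ (L * ‖(x + t • v) - x‖) * ‖v‖ := by
                  apply mul_le_mul_of_nonneg_right (hsmooth _ _) (norm_nonneg _)
              _ = L * (|t| * ‖v‖) * ‖v‖ := by rw [add_sub_cancel_left, norm_smul]; simp [Real.norm_eq_abs]
              _ = L * |t| * ‖v‖ ^ 2 := by ring
              _ ≤ L * t * ‖v‖ ^ 2 := by
                  apply mul_le_mul_of_nonneg_right _ (sq_nonneg _)
                  exact mul_le_mul_of_nonneg_left (le_of_eq (abs_of_pos ht.1)) hL
          have := inner_sub_left (𝕜 := ℝ) (gradient f (x + t • v)) (gradient f x) v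
          linarith [hb, this.symm.le, this.le]
      · exact le_refl _
    exact this (by norm_num) (by norm_num) (by norm_num)
  simp only [hh] at hmono
  simp only [one_smul, zero_smul, add_zero, one_pow, zero_pow, one_mul, zero_mul] at hmono
  nlinarith [hmono]

set_option maxHeartbeats 1000000 in
theorem stmt15 {n : ℕ} (f : EuclideanSpace ℝ (Fin n) → ℝ) (L Λ : ℝ)
    (wstar : EuclideanSpace ℝ (Fin n)) (hL : 0 < L)
    (hconv : ConvexOn ℝ Set.univ f) (hdiff : Differentiable ℝ f)
    (hsmooth : ∀ u v, ‖gradient f u - gradient f v‖ ≤ L * ‖u - v‖)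
    (hmin : ∀ w, f wstar ≤ f w)
    (w lam : EuclideanSpace ℝ (Fin n)) (hlam : ‖lam‖ ≤ Λ) :
    f (w - (1 / (2 * L)) • (gradient f w + lam)) - f w ≤
        -(1 / (4 * L)) * ‖gradient f w‖ ^ 2 + 1 / (2 * L) * ‖gradient f w‖ * Λ +
          1 / (4 * L) * Λ ^ 2 ∧
      (‖gradient f w‖ ≥ 2 * Λ →
        f (w - (1 / (2 * L)) • (gradient f w + lam)) - f w ≤
          -(1 / (16 * L)) * ‖gradient f w‖ ^ 2) := by
  set g := gradient f w with hg
  set G := ‖g‖ with hG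
  set c := 1 / (2 * L) with hc
  have hc0 : 0 ≤ c := by positivity
  have hΛ0 : 0 ≤ Λ := le_trans (norm_nonneg _) hlam
  have hG0 : 0 ≤ G := norm_nonneg _
  have hstep := descent_aux f L hL.le hdiff hsmooth w (-(c • (g + lam)))
  rw [← sub_eq_add_neg] at hstep
  have h1 : ⟪g, -(c • (g + lam))⟫ = -(c * (G ^ 2 + ⟪g, lam⟫)) := by
    rw [inner_neg_right, real_inner_smul_right, inner_add_right, real_inner_self_eq_norm_sq]
  have h2 : ‖-(c • (g + lam))‖ ^ 2 = c ^ 2 * ‖g + lam‖ ^ 2 := by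
    rw [norm_neg, norm_smul]
    simp [Real.norm_eq_abs, abs_of_nonneg hc0, mul_pow]
  have hip : -(G * Λ) ≤ ⟪g, lam⟫ := by
    have := abs_real_inner_le_norm g lam
    have h3 : G * ‖lam‖ ≤ G * Λ := mul_le_mul_of_nonneg_left hlam hG0
    have := abs_le.mp this
    linarith [this.1]
  have hsum : ‖g + lam‖ ^ 2 = G ^ 2 + 2 * ⟪g, lam⟫ + ‖lam‖ ^ 2 := by
    rw [hG, norm_add_sq_real]
  have hl2 : ‖lam‖ ^ 2 ≤ Λ ^ 2 := by nlinarith [norm_nonneg lam]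
  have hkey : L * (f (w - c • (g + lam)) - f w) ≤
      -(3/8) * G ^ 2 + (1/4) * G * Λ + (1/8) * Λ ^ 2 := by
    rw [h1, h2] at hstep
    have hLc : L * c = 1 / 2 := by rw [hc]; field_simp
    have hLc2 : L * (L / 2 * c ^ 2) = 1 / 8 := by
      rw [hc]; field_simp; ring
    have := mul_le_mul_of_nonneg_left (sub_le_iff_le_add'.mpr hstep) hL.le
    -- L * fdiff ≤ L * (-(c*(G²+ip)) + L/2 * (c² * S))
    have hexp : L * (f w + -(c * (G ^ 2 + ⟪g, lam⟫)) + L / 2 * (c ^ 2 * ‖g + lam‖ ^ 2) - f w)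
        = -(1/2) * (G ^ 2 + ⟪g, lam⟫) + (1/8) * ‖g + lam‖ ^ 2 := by
      rw [hc]; field_simp; ring
    calc L * (f (w - c • (g + lam)) - f w)
        ≤ L * (f w + -(c * (G ^ 2 + ⟪g, lam⟫)) + L / 2 * (c ^ 2 * ‖g + lam‖ ^ 2) - f w) := by
          apply mul_le_mul_of_nonneg_left _ hL.le
          linarith [hstep]
      _ = -(1/2) * (G ^ 2 + ⟪g, lam⟫) + (1/8) * ‖g + lam‖ ^ 2 := hexp
      _ ≤ -(3/8) * G ^ 2 + (1/4) * G * Λ + (1/8) * Λ ^ 2 := by rw [hsum]; nlinarith [hip, hl2]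
  constructor
  · refine le_of_mul_le_mul_left ?_ hL
    have hr : L * (-(1 / (4 * L)) * G ^ 2 + 1 / (2 * L) * G * Λ + 1 / (4 * L) * Λ ^ 2)
        = -(1/4) * G ^ 2 + (1/2) * G * Λ + (1/4) * Λ ^ 2 := by
      field_simp
    rw [hr]
    nlinarith [hkey, mul_nonneg hG0 hΛ0, sq_nonneg G, sq_nonneg Λ]
  · intro hbig
    refine le_of_mul_le_mul_left ?_ hL
    have hr : L * (-(1 / (16 * L)) * G ^ 2) = -(1/16) * G ^ 2 := by field_simp
    rw [hr]
    nlinarith [hkey, mul_nonneg (sub_nonneg.mpr hbig) hΛ0, sq_nonneg (G - 2*Λ), hΛ0]
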